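/- With fₙ = −1 + 2·(Fib₁ + Fib₂ + ... + Fib_{n+2}) and Fₙ = 2 + 4·(Fib₁·Fib₂ + Fib₂·Fib₃ + ... + Fibₙ·Fib_{n+1}), one has lim_{n→∞} fₙ²/Fₙ = φ⁶, where φ = (1+√5)/2. (This is Equation (4): the Eisenstein isoperimetric ratio of the golden ratio satisfies η(φ⁻¹) = φ⁶.) -/

import Mathlib

open Filter

/-- The golden ratio `φ = (1 + √5)/2`. -/
noncomputable def phi : ℝ := (1 + Real.sqrt 5) / 2

/-- The fold count of the continued fraction coloring `C(Fibₙ + Fib_{n+1} α)`: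
`fₙ = -1 + 2 ∑_{k=1}^{n+2} Fib_k`. -/
def foldCount (n : ℕ) : ℤ := -1 + 2 * ∑ k ∈ Finset.Icc 1 (n + 2), (Nat.fib k : ℤ)

/-- The number of faces of the triangulation `T(Fibₙ + Fib_{n+1} α)`:
`Fₙ = 2 + 4 ∑_{k=1}^{n} Fib_k Fib_{k+1}`. -/
def faceCount (n : ℕ) : ℕ := 2 + 4 * ∑ k ∈ Finset.Icc 1 n, Nat.fib k * Nat.fib (k + 1)

open Real goldenRatio in
private lemma phi_eq : phi = goldenRatio := rfl

section aux
open Real goldenRatio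

private lemma sum_fib' (m : ℕ) : ∑ k ∈ Finset.Icc 1 m, (Nat.fib k : ℤ) = Nat.fib (m + 2) - 1 := by
  induction m with
  | zero => simp
  | succ n ih =>
      rw [Finset.sum_Icc_succ_top (by omega), ih]
      have h1 : Nat.fib (n+3) = Nat.fib (n+1) + Nat.fib (n+2) := Nat.fib_add_two
      push_cast [show n+1+2=n+3 from rfl, h1]
      ring

private lemma cassini' (n : ℕ) :
    ((Nat.fib (n+1) : ℤ))^2 - Nat.fib n * Nat.fib (n+1) - (Nat.fib n : ℤ)^2 = (-1)^n := by
  induction n with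
  | zero => simp
  | succ n ih =>
      have h : Nat.fib (n+2) = Nat.fib n + Nat.fib (n+1) := Nat.fib_add_two
      push_cast [h, pow_succ]
      linear_combination -ih

private lemma sum_fibmul' (n : ℕ) : 2 * ∑ k ∈ Finset.Icc 1 n, (Nat.fib k * Nat.fib (k+1) : ℤ)
    = 2 * (Nat.fib (n+1) : ℤ)^2 - 1 - (-1)^n := by
  induction n with
  | zero => simp
  | succ n ih =>
      rw [Finset.mul_sum] at *
      rw [Finset.sum_Icc_succ_top (by omega), ih, pow_succ]
      have := cassini' (n+1)
      push_cast [pow_succ] at this ⊢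
      nlinarith [this, sq_nonneg ((Nat.fib (n+1) : ℤ))]

private lemma fold_eq (n : ℕ) : (foldCount n : ℝ) = 2 * Nat.fib (n + 4) - 3 := by
  have : foldCount n = 2 * (Nat.fib (n + 4) : ℤ) - 3 := by
    rw [foldCount, sum_fib']; ring_nf
  rw [this]; push_cast; ring

private lemma face_eq (n : ℕ) : (faceCount n : ℝ) = 4 * (Nat.fib (n + 1) : ℝ)^2 - 2 * (-1)^n := by
  have h : (faceCount n : ℤ) = 4 * (Nat.fib (n + 1) : ℤ)^2 - 2 * (-1)^n := by
    have := sum_fibmul' n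
    rw [faceCount]
    push_cast
    linarith
  have := congrArg (fun x : ℤ => (x : ℝ)) h
  push_cast at this
  simpa using this

private lemma abs_ratio_lt : |ψ / φ| < 1 := by
  rw [abs_div, abs_of_pos goldenRatio_pos, div_lt_one goldenRatio_pos]
  have h1 : |ψ| < 1 := abs_lt.mpr ⟨neg_one_lt_goldenConj, by nlinarith [goldenConj_neg]⟩
  linarith [one_lt_goldenRatio]

private lemma tendsto_fib_shift (k : ℕ) :
    Tendsto (fun n : ℕ => (Nat.fib (n + k) : ℝ) * (φ⁻¹)^n) atTop (nhds (φ^k / √5)) := by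
  have hs : (√5 : ℝ) ≠ 0 := by positivity
  have heq : ∀ n : ℕ, (Nat.fib (n + k) : ℝ) * (φ⁻¹)^n
      = (φ^k - ψ^k * (ψ/φ)^n) / √5 := by
    intro n
    rw [Real.coe_fib_eq, pow_add, pow_add, div_pow ψ φ n, inv_pow]
    have ha : φ^n ≠ 0 := pow_ne_zero _ goldenRatio_ne_zero
    generalize φ^n = a at ha ⊢
    generalize ψ^n = b
    generalize φ^k = c
    generalize ψ^k = d
    field_simp
  simp only [heq]
  have h0 : Tendsto (fun n : ℕ => (ψ/φ)^n) atTop (nhds 0) :=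
    tendsto_pow_atTop_nhds_zero_of_abs_lt_one abs_ratio_lt
  have : Tendsto (fun n : ℕ => (φ^k - ψ^k * (ψ/φ)^n) / √5) atTop
      (nhds ((φ^k - ψ^k * 0) / √5)) :=
    ((tendsto_const_nhds.sub (tendsto_const_nhds.mul h0))).div_const _
  simpa using this

private lemma tendsto_err :
    Tendsto (fun n : ℕ => ((-1:ℝ))^n * ((φ⁻¹)^n)^2) atTop (nhds 0) := by
  have : ∀ n : ℕ, ((-1:ℝ))^n * ((φ⁻¹)^n)^2 = (-(φ⁻¹^2))^n := by
    intro n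
    rw [show (-(φ⁻¹^2) : ℝ) = (-1) * φ⁻¹^2 by ring, mul_pow, pow_right_comm]
  simp only [this]
  apply tendsto_pow_atTop_nhds_zero_of_abs_lt_one
  rw [abs_neg, abs_of_nonneg (by positivity)]
  have := one_lt_goldenRatio
  have : 1 < φ^2 := by nlinarith
  rw [inv_pow]
  exact inv_lt_one_of_one_lt₀ this

private lemma tendsto_three :
    Tendsto (fun n : ℕ => (3:ℝ) * (φ⁻¹)^n) atTop (nhds 0) := by
  have h0 : Tendsto (fun n : ℕ => (φ⁻¹:ℝ)^n) atTop (nhds 0) := by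
    apply tendsto_pow_atTop_nhds_zero_of_abs_lt_one
    rw [abs_of_nonneg (by positivity)]
    exact inv_lt_one_of_one_lt₀ one_lt_goldenRatio
  simpa using tendsto_const_nhds.mul h0

end aux

theorem stmt10 :
    Tendsto (fun n : ℕ => ((foldCount n : ℝ)) ^ 2 / (faceCount n : ℝ)) atTop
      (nhds (phi ^ 6)) := by
  open Real goldenRatio in
  rw [phi_eq]
  have hs5 : (√5 : ℝ) ^ 2 = 5 := Real.sq_sqrt (by norm_num)
  have hs : (√5 : ℝ) ≠ 0 := by positivity
  have hgold := one_lt_goldenRatio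
  -- rewrite pointwise
  have heq : ∀ n : ℕ, ((foldCount n : ℝ)) ^ 2 / (faceCount n : ℝ)
      = ((2 * (Nat.fib (n+4):ℝ) - 3) * (φ⁻¹)^n)^2
        / (4 * ((Nat.fib (n+1):ℝ) * (φ⁻¹)^n)^2 - 2 * (-1)^n * ((φ⁻¹)^n)^2) := by
    intro n
    have hc : ((φ⁻¹:ℝ)^n)^2 ≠ 0 := by positivity
    rw [fold_eq, face_eq]
    rw [show ((2 * (Nat.fib (n+4):ℝ) - 3) * (φ⁻¹)^n)^2
        = (2 * (Nat.fib (n+4):ℝ) - 3)^2 * ((φ⁻¹)^n)^2 by ring,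
      show (4 * ((Nat.fib (n+1):ℝ) * (φ⁻¹)^n)^2 - 2 * (-1)^n * ((φ⁻¹)^n)^2)
        = (4 * (Nat.fib (n+1):ℝ)^2 - 2 * (-1)^n) * ((φ⁻¹)^n)^2 by ring,
      mul_div_mul_right _ _ hc]
  simp only [heq]
  -- limits
  have hA : Tendsto (fun n : ℕ => (2 * (Nat.fib (n+4):ℝ) - 3) * (φ⁻¹)^n) atTop
      (nhds (2 * (φ^4 / √5))) := by
    have h2 := ((tendsto_fib_shift 4).const_mul (2:ℝ)).sub tendsto_three
    rw [sub_zero] at h2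
    exact h2.congr (fun n => by ring)
  have hD : Tendsto (fun n : ℕ =>
      4 * ((Nat.fib (n+1):ℝ) * (φ⁻¹)^n)^2 - 2 * (-1)^n * ((φ⁻¹)^n)^2) atTop
      (nhds (4 * (φ / √5)^2 - 0)) := by
    have h1 : Tendsto (fun n : ℕ => 4 * ((Nat.fib (n+1):ℝ) * (φ⁻¹)^n)^2) atTop
        (nhds (4 * (φ^1 / √5)^2)) := ((tendsto_fib_shift 1).pow 2).const_mul 4
    have h2 := tendsto_err.const_mul (2:ℝ)
    simpa [pow_one, mul_assoc] using h1.sub h2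
  have hDne : (4 * (φ / √5)^2 - 0 : ℝ) ≠ 0 := by
    rw [sub_zero]
    have : (0:ℝ) < φ := goldenRatio_pos
    positivity
  have hlim := (hA.pow 2).div hD hDne
  have keygen : ∀ a s : ℝ, a ≠ 0 → s ≠ 0 → (2*(a^4/s))^2 / (4*(a/s)^2 - 0) = a^6 := by
    intro a s ha hs
    rw [sub_zero]
    field_simp
    ring
  have key := keygen φ (√5) (ne_of_gt goldenRatio_pos) hs
  rwa [key] at hlim
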